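/- (Aubin–Nitsche duality L² estimate.) Let Ω ⊂ ℝ² be a bounded domain, V_h ⊂ H^1_0(Ω) a subspace, and u, u_h ∈ H^1_0(Ω) satisfy the Galerkin orthogonality (∇(u − u_h), ∇w_h) = 0 for all w_h ∈ V_h. Suppose the dual regularity holds: for every g ∈ L²(Ω) the solution w ∈ H^1_0(Ω) of (∇w, ∇v) = (g, v) for all v ∈ H^1_0(Ω) satisfies |w|_2 ≤ C‖g‖_0, and suppose the Galerkin approximation w_h ∈ V_h of w satisfies |w − w_h|_1 ≤ C h |w|_2. If additionally |u − u_h|_1 ≤ C h^k |u|_{k+1}, then ‖u − u_h‖_{L²(Ω)} ≤ C h^{k+1} |u|_{k+1}. -/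

import Mathlib

open MeasureTheory MvPolynomial
open scoped RealInnerProductSpace

noncomputable section

abbrev E2 : Type := EuclideanSpace ℝ (Fin 2)

/-- `f` agrees on `s` with a bivariate polynomial of total degree at most `k`. -/
def IsPolyOn (k : ℕ) (s : Set E2) (f : E2 → ℝ) : Prop :=
  ∃ p : MvPolynomial (Fin 2) ℝ, p.totalDegree ≤ k ∧
    ∀ x ∈ s, f x = eval (fun i => x i) p

/-- A nondegenerate triangle in the plane. -/
structure Tri where
  A : E2
  B : E2
  C : E2
  indep : AffineIndependent ℝ ![A, B, C]

def Tri.K (T : Tri) : Set E2 := convexHull ℝ {T.A, T.B, T.C}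
def Tri.bary (T : Tri) : E2 := (3 : ℝ)⁻¹ • (T.A + T.B + T.C)
def Tri.K1 (T : Tri) : Set E2 := convexHull ℝ {T.bary, T.B, T.C}
def Tri.K2 (T : Tri) : Set E2 := convexHull ℝ {T.bary, T.C, T.A}
def Tri.K3 (T : Tri) : Set E2 := convexHull ℝ {T.bary, T.A, T.B}

/-- The HCT macro-element space `𝕍_k(K)`: continuous on `K`, polynomial of degree ≤ k on
each HCT subtriangle. -/
def Vk (k : ℕ) (T : Tri) (v : E2 → ℝ) : Prop :=
  ContinuousOn v T.K ∧ IsPolyOn k T.K1 v ∧ IsPolyOn k T.K2 v ∧ IsPolyOn k T.K3 v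

/-- The continuous piecewise-affine hat function on the HCT split: 1 at the barycenter,
0 on ∂K, affine on each subtriangle. -/
def IsHCTHat (T : Tri) (φ : E2 → ℝ) : Prop :=
  ContinuousOn φ T.K ∧ (∀ x ∈ frontier T.K, φ x = 0) ∧ φ T.bary = 1 ∧
    (∃ ℓ : E2 →ᵃ[ℝ] ℝ, ∀ x ∈ T.K1, φ x = ℓ x) ∧
    (∃ ℓ : E2 →ᵃ[ℝ] ℝ, ∀ x ∈ T.K2, φ x = ℓ x) ∧
    (∃ ℓ : E2 →ᵃ[ℝ] ℝ, ∀ x ∈ T.K3, φ x = ℓ x)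

/-- The (strong) Laplacian of `u : ℝ² → ℝ`. -/
def lap (u : E2 → ℝ) (x : E2) : ℝ :=
  ∑ i : Fin 2,
    fderiv ℝ (fun y => fderiv ℝ u y (EuclideanSpace.single i (1 : ℝ))) x
      (EuclideanSpace.single i (1 : ℝ))


lemma my_integrable_inner {α : Type*} [MeasurableSpace α] {μ : Measure α} {f g : α → E2}
    (hf : MemLp f 2 μ) (hg : MemLp g 2 μ) :
    Integrable (fun x => ⟪f x, g x⟫) μ := by
  have h := L2.integrable_inner (𝕜 := ℝ) (hf.toLp f) (hg.toLp g)
  refine h.congr ?_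
  filter_upwards [hf.coeFn_toLp, hg.coeFn_toLp] with x h1 h2
  rw [h1, h2]

lemma my_cs {α : Type*} [MeasurableSpace α] {μ : Measure α} {f g : α → E2}
    (hf : MemLp f 2 μ) (hg : MemLp g 2 μ) :
    ∫ x, ⟪f x, g x⟫ ∂μ ≤
      Real.sqrt (∫ x, ‖f x‖ ^ 2 ∂μ) * Real.sqrt (∫ x, ‖g x‖ ^ 2 ∂μ) := by
  set F := hf.toLp f with hF
  set G := hg.toLp g with hG
  have hFf : F =ᵐ[μ] f := hf.coeFn_toLp
  have hGg : G =ᵐ[μ] g := hg.coeFn_toLp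
  have h1 : ∫ x, ⟪f x, g x⟫ ∂μ = ⟪F, G⟫ := by
    rw [L2.inner_def]
    refine integral_congr_ae ?_
    filter_upwards [hFf, hGg] with x h1 h2
    rw [h1, h2]
  have hnorm : ∀ (f : α → E2) (hmem : MemLp f 2 μ),
      ‖hmem.toLp f‖ = Real.sqrt (∫ x, ‖f x‖ ^ 2 ∂μ) := by
    intro f hmem
    have h2 : ⟪hmem.toLp f, hmem.toLp f⟫ = ∫ x, ‖f x‖ ^ 2 ∂μ := by
      rw [L2.inner_def]
      refine integral_congr_ae ?_
      filter_upwards [hmem.coeFn_toLp] with x hx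
      rw [hx, real_inner_self_eq_norm_sq]
    rw [← Real.sqrt_sq (norm_nonneg _)]
    congr 1
    rw [← h2, real_inner_self_eq_norm_sq]
  rw [h1, ← hnorm f hf, ← hnorm g hg]
  exact real_inner_le_norm F G

/-- Aubin–Nitsche duality argument.  With `w` the dual solution for the
datum `g = u - u_h` and `w_h ∈ V_h` its Galerkin projection, the Galerkin orthogonality,
full regularity `|w|₂ ≤ C‖u-u_h‖₀`, the first-order bound `|w-w_h|₁ ≤ C h |w|₂`, and the
`H¹` error bound `|u-u_h|₁ ≤ C h^k |u|_{k+1}` together give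
`‖u - u_h‖₀ ≤ C³ h^{k+1} |u|_{k+1}`. -/
theorem aubin_nitsche (Ω : Set E2) (k : ℕ) (C h : ℝ) (hC : 0 ≤ C) (hh : 0 ≤ h)
    (Vh : Set (E2 → ℝ)) (u uh w wh : E2 → ℝ) (hwh : wh ∈ Vh)
    (hmeu : MemLp (fun x => gradient u x - gradient uh x) 2 (volume.restrict Ω))
    (hmew : MemLp (fun x => gradient w x - gradient wh x) 2 (volume.restrict Ω))
    (horth : ∀ vh ∈ Vh,
      ∫ x in Ω, ⟪gradient u x - gradient uh x, gradient vh x⟫ = 0)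
    (hdual : ∫ x in Ω, ⟪gradient w x, gradient u x - gradient uh x⟫ =
      ∫ x in Ω, (u x - uh x) ^ 2)
    (hreg : Real.sqrt (∫ x in Ω, ‖fderiv ℝ (fderiv ℝ w) x‖ ^ 2) ≤
      C * Real.sqrt (∫ x in Ω, (u x - uh x) ^ 2))
    (happrox : Real.sqrt (∫ x in Ω, ‖gradient w x - gradient wh x‖ ^ 2) ≤
      C * h * Real.sqrt (∫ x in Ω, ‖fderiv ℝ (fderiv ℝ w) x‖ ^ 2))
    (herr : Real.sqrt (∫ x in Ω, ‖gradient u x - gradient uh x‖ ^ 2) ≤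
      C * h ^ k * Real.sqrt (∫ x in Ω, ‖iteratedFDeriv ℝ (k + 1) u x‖ ^ 2)) :
    Real.sqrt (∫ x in Ω, (u x - uh x) ^ 2) ≤
      C ^ 3 * h ^ (k + 1) * Real.sqrt (∫ x in Ω, ‖iteratedFDeriv ℝ (k + 1) u x‖ ^ 2) := by
  set S := Real.sqrt (∫ x in Ω, (u x - uh x) ^ 2) with hSdef
  set U := Real.sqrt (∫ x in Ω, ‖iteratedFDeriv ℝ (k + 1) u x‖ ^ 2) with hUdef
  have hSnn : 0 ≤ S := Real.sqrt_nonneg _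
  have hUnn : 0 ≤ U := Real.sqrt_nonneg _
  have hRHSnn : 0 ≤ C ^ 3 * h ^ (k + 1) * U := by positivity
  by_cases hint : Integrable
      (fun x => ⟪gradient w x, gradient u x - gradient uh x⟫) (volume.restrict Ω)
  · have hΔ : Integrable
        (fun x => ⟪gradient w x - gradient wh x, gradient u x - gradient uh x⟫)
        (volume.restrict Ω) := my_integrable_inner hmew hmeu
    have hB : Integrable
        (fun x => ⟪gradient wh x, gradient u x - gradient uh x⟫) (volume.restrict Ω) := by
      refine (hint.sub hΔ).congr ?_
      filter_upwards with x
      simp only [Pi.sub_apply]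
      rw [inner_sub_left]
      ring
    have hBzero : ∫ x in Ω, ⟪gradient wh x, gradient u x - gradient uh x⟫ = 0 := by
      have h0 := horth wh hwh
      rw [← h0]
      refine integral_congr_ae ?_
      filter_upwards with x
      exact real_inner_comm _ _
    have hsplit : ∫ x in Ω, ⟪gradient w x - gradient wh x, gradient u x - gradient uh x⟫ =
        ∫ x in Ω, (u x - uh x) ^ 2 := by
      have : ∫ x in Ω, ⟪gradient w x - gradient wh x, gradient u x - gradient uh x⟫ =
          (∫ x in Ω, ⟪gradient w x, gradient u x - gradient uh x⟫) -
            ∫ x in Ω, ⟪gradient wh x, gradient u x - gradient uh x⟫ := by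
        rw [← integral_sub hint hB]
        refine integral_congr_ae ?_
        filter_upwards with x
        rw [inner_sub_left]
      rw [this, hBzero, hdual, sub_zero]
    have hE2nn : (0 : ℝ) ≤ ∫ x in Ω, (u x - uh x) ^ 2 :=
      integral_nonneg fun x => sq_nonneg _
    have hSsq : S ^ 2 = ∫ x in Ω, (u x - uh x) ^ 2 := Real.sq_sqrt hE2nn
    have hCS := my_cs hmew hmeu
    set N := Real.sqrt (∫ x in Ω, ‖gradient w x - gradient wh x‖ ^ 2) with hNdef
    set M := Real.sqrt (∫ x in Ω, ‖gradient u x - gradient uh x‖ ^ 2) with hMdef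
    set W := Real.sqrt (∫ x in Ω, ‖fderiv ℝ (fderiv ℝ w) x‖ ^ 2) with hWdef
    have hNnn : 0 ≤ N := Real.sqrt_nonneg _
    have hMnn : 0 ≤ M := Real.sqrt_nonneg _
    have hWnn : 0 ≤ W := Real.sqrt_nonneg _
    have hkey : S ^ 2 ≤ N * M := by
      rw [hSsq, ← hsplit]
      exact hCS
    have hNle : N ≤ C * h * (C * S) :=
      happrox.trans (by
        have := mul_le_mul_of_nonneg_left hreg (by positivity : (0:ℝ) ≤ C * h)
        linarith)
    have hMle : M ≤ C * h ^ k * U := herr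
    have hfinal : S ^ 2 ≤ (C ^ 3 * h ^ (k + 1) * U) * S := by
      have h1 : N * M ≤ (C * h * (C * S)) * (C * h ^ k * U) :=
        mul_le_mul hNle hMle hMnn (by positivity)
      have h2 : (C * h * (C * S)) * (C * h ^ k * U) = (C ^ 3 * h ^ (k + 1) * U) * S := by
        ring
      linarith
    rcases hSnn.eq_or_lt with h0 | hpos
    · rw [← h0]; exact hRHSnn
    · have : S * S ≤ (C ^ 3 * h ^ (k + 1) * U) * S := by nlinarith
      exact le_of_mul_le_mul_right this hpos
  · have hz : ∫ x in Ω, ⟪gradient w x, gradient u x - gradient uh x⟫ = 0 :=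
      integral_undef hint
    have : (∫ x in Ω, (u x - uh x) ^ 2) = 0 := by rw [← hdual, hz]
    rw [hSdef, this, Real.sqrt_zero] at *
    exact hRHSnn
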